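/- Let d ≥ 2 with d not congruent to 0 mod 4, f(x) = x^d - a over F_q with a ≠ 0, and P_n as defined. Let n₀ < m₀ be the minimal pair of integers with P_{n₀}(a) = P_{m₀}(a). Then f is stable over F_q (all iterates f_n are irreducible) if and only if for every prime l dividing d and every k in {1, ..., m₀ - 1}, P_k(a) is neither 0 nor an l-th power in F_q^*. -/

import Mathlib

open Polynomial

/-- `iter f n` is the n-th iterate of `f` under composition, with `iter f 0 = X`. -/
noncomputable def iter {F : Type*} [Field F] (f : F[X]) : ℕ → F[X]
  | 0 => X
  | n + 1 => (iter f n).comp f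

/-- `P d a n` is the value `P_n(a)` where `P_1(x) = x` and
`P_n(x) = P_{n-1}(x)^d + (-1)^(d-1) x` for `n ≥ 2`. (`P d a 0` is junk, set to `a`.) -/
def P {F : Type*} [Field F] (d : ℕ) (a : F) : ℕ → F
  | 0 => a
  | 1 => a
  | n + 2 => (P d a (n + 1)) ^ d + (-1 : F) ^ (d - 1) * a

/-! ### Auxiliary lemmas -/

section Aux

variable {F : Type*} [Field F]

/-- Natural number geometric sum identity. -/
lemma nat_geom (q m : ℕ) (hq : 1 ≤ q) :
    (q - 1) * (∑ i ∈ Finset.range m, q ^ i) = q ^ m - 1 := by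
  induction m with
  | zero => simp
  | succ m ih =>
    rw [Finset.sum_range_succ, Nat.mul_add, ih, Nat.sub_mul]
    have h1 : 1 ≤ q ^ m := Nat.one_le_pow _ _ hq
    have h2 : q ^ m ≤ q * q ^ m := Nat.le_mul_of_pos_left _ hq
    have h3 : q ^ (m + 1) = q * q ^ m := by ring
    omega

/-- In a field whose unit group has order `l * k`, a nonzero `c` is an `l`-th power iff
`c ^ k = 1`. -/
lemma pow_criterion {E : Type*} [Field E] [Fintype E] {l k : ℕ}
    (hk : Fintype.card E - 1 = l * k) {c : E} (hc : c ≠ 0) :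
    (∃ b : E, b ^ l = c) ↔ c ^ k = 1 := by
  haveI : Fintype Eˣ := Fintype.ofFinite _
  have hcard : Fintype.card Eˣ = l * k := by
    rw [← Nat.card_eq_fintype_card, Nat.card_units, Nat.card_eq_fintype_card, hk]
  have hcardpos : 0 < Fintype.card Eˣ := Fintype.card_pos
  have hl0 : l ≠ 0 := by rintro rfl; rw [hcard] at hcardpos; simp at hcardpos
  have hk0 : k ≠ 0 := by rintro rfl; rw [hcard] at hcardpos; simp at hcardpos
  constructor
  · rintro ⟨b, rfl⟩
    have hb : b ≠ 0 := fun e => hc (by rw [e, zero_pow hl0])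
    have h1 : (Units.mk0 b hb) ^ (l * k) = 1 := by rw [← hcard]; exact pow_card_eq_one
    have := congrArg (Units.val) h1
    rw [Units.val_pow_eq_pow_val, Units.val_one, Units.val_mk0, pow_mul] at this
    exact this
  · intro h1
    obtain ⟨g, hg⟩ := IsCyclic.exists_generator (α := Eˣ)
    set cu := Units.mk0 c hc with hcu_def
    obtain ⟨t, ht⟩ : ∃ t : ℕ, g ^ t = cu := by
      have h2 := hg cu
      rwa [← mem_powers_iff_mem_zpowers, Submonoid.mem_powers_iff] at h2
    have hord : orderOf g = l * k := by
      rw [orderOf_eq_card_of_forall_mem_zpowers hg, Nat.card_eq_fintype_card, hcard]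
    have hcuk : cu ^ k = 1 := by
      apply Units.ext
      rw [Units.val_pow_eq_pow_val, Units.val_one, Units.val_mk0]
      exact h1
    have h3 : g ^ (t * k) = 1 := by rw [pow_mul, ht, hcuk]
    have hdvd : l * k ∣ t * k := hord ▸ orderOf_dvd_of_pow_eq_one h3
    have h4 : l ∣ t := (Nat.mul_dvd_mul_iff_right (Nat.pos_of_ne_zero hk0)).mp hdvd
    obtain ⟨s, rfl⟩ := h4
    refine ⟨((g ^ s : Eˣ) : E), ?_⟩
    rw [← Units.val_pow_eq_pow_val, ← pow_mul, mul_comm s l, ht, hcu_def, Units.val_mk0]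

/-- If `l` is a prime not dividing `card F - 1`, every element is an `l`-th power. -/
lemma exists_pow_eq_of_not_dvd [Fintype F] {l : ℕ} (hl : l.Prime)
    (h : ¬ l ∣ Fintype.card F - 1) (a : F) : ∃ b : F, b ^ l = a := by
  have hco : (Nat.card Fˣ).Coprime l := by
    rw [Nat.card_units, Nat.card_eq_fintype_card]
    exact Nat.Coprime.symm ((hl.coprime_iff_not_dvd).mpr h)
  rcases eq_or_ne a 0 with rfl | ha
  · exact ⟨0, by rw [zero_pow hl.ne_zero]⟩
  · refine ⟨(((powCoprime hco).symm (Units.mk0 a ha) : Fˣ) : F), ?_⟩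
    have h2 := (powCoprime hco).apply_symm_apply (Units.mk0 a ha)
    rw [powCoprime_apply] at h2
    rw [← Units.val_pow_eq_pow_val, h2, Units.val_mk0]

/-- `X ^ (l*m) - C (b ^ l)` is reducible when `l ≥ 2`, `m ≥ 1`. -/
lemma reducible_X_pow_sub_C_pow {l m : ℕ} (hl : 2 ≤ l) (hm : 1 ≤ m) (b : F) :
    ¬ Irreducible (X ^ (l * m) - C (b ^ l) : F[X]) := by
  intro hI
  have hdvd : (X ^ m - C b : F[X]) ∣ X ^ (l * m) - C (b ^ l) := by
    have h2 := sub_dvd_pow_sub_pow (X ^ m : F[X]) (C b) l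
    rwa [← pow_mul, mul_comm m l, ← C_pow] at h2
  obtain ⟨u, hu⟩ := hdvd
  have hm0 : m ≠ 0 := by omega
  rcases hI.2 hu with h1 | h2
  · have h3 := natDegree_eq_zero_of_isUnit h1
    rw [natDegree_X_pow_sub_C] at h3
    omega
  · have hu0 : u ≠ 0 := by
      rintro rfl
      rw [mul_zero] at hu
      exact X_pow_sub_C_ne_zero (by positivity) _ hu
    have h3 := congrArg natDegree hu
    rw [natDegree_X_pow_sub_C, natDegree_mul (X_pow_sub_C_ne_zero (by omega) _) hu0,
      natDegree_X_pow_sub_C, natDegree_eq_zero_of_isUnit h2] at h3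
    have h4 : 2 * m ≤ l * m := Nat.mul_le_mul_right m hl
    omega

/-- A monic polynomial of positive degree all of whose irreducible factors have full degree
is irreducible. -/
lemma irreducible_of_factors_ge {h : F[X]} (hm : h.Monic) (hd : h.natDegree ≠ 0)
    (H : ∀ p : F[X], Irreducible p → p ∣ h → h.natDegree ≤ p.natDegree) : Irreducible h := by
  have h0 : h ≠ 0 := hm.ne_zero
  refine ⟨fun hu => hd (natDegree_eq_zero_of_isUnit hu), ?_⟩
  intro A B hAB
  by_contra hcon
  push_neg at hcon
  obtain ⟨hA, hB⟩ := hcon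
  have hA0 : A ≠ 0 := fun e => h0 (by rw [hAB, e, zero_mul])
  have hB0 : B ≠ 0 := fun e => h0 (by rw [hAB, e, mul_zero])
  obtain ⟨p, hp, hpA⟩ := WfDvdMonoid.exists_irreducible_factor hA hA0
  have h1 : h.natDegree ≤ p.natDegree := H p hp (hpA.trans ⟨B, hAB⟩)
  have h2 : p.natDegree ≤ A.natDegree := natDegree_le_of_dvd hpA hA0
  have h3 : h.natDegree = A.natDegree + B.natDegree := by rw [hAB, natDegree_mul hA0 hB0]
  have hBdeg : B.natDegree = 0 := by omega
  have hBC : B = C (B.coeff 0) := eq_C_of_natDegree_eq_zero hBdeg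
  have : B.coeff 0 ≠ 0 := fun e => hB0 (by rw [hBC, e, map_zero])
  exact hB (hBC ▸ isUnit_C.mpr (isUnit_iff_ne_zero.mpr this))

end Aux

section Frobenius

variable {F K : Type*} [Field F] [Fintype F] [Field K] [Algebra F K]

lemma exists_frob (F : Type*) [Field F] [Fintype F] (K : Type*) [Field K] [Algebra F K]
    (i : ℕ) : ∃ φ : K →+* K, ∀ y : K, φ y = y ^ (Fintype.card F) ^ i := by
  set p := ringChar F with hp_def
  haveI : CharP F p := ringChar.charP F
  haveI : CharP K p := charP_of_injective_algebraMap (algebraMap F K).injective p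
  obtain ⟨e, hp, hq⟩ := FiniteField.card F p
  haveI : Fact p.Prime := ⟨hp⟩
  refine ⟨iterateFrobenius K p ((e : ℕ) * i), fun y => ?_⟩
  rw [iterateFrobenius_def, hq, ← pow_mul]

lemma frob_comp_alg {φ : K →+* K} {i : ℕ}
    (hφ : ∀ y : K, φ y = y ^ (Fintype.card F) ^ i) (x : F) :
    φ (algebraMap F K x) = algebraMap F K x := by
  rw [hφ, ← map_pow, FiniteField.pow_card_pow]

lemma pow_card_pow_injective (i : ℕ) :
    Function.Injective (fun x : K => x ^ (Fintype.card F) ^ i) := by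
  obtain ⟨φ, hφ⟩ := exists_frob F K i
  have : (fun x : K => x ^ (Fintype.card F) ^ i) = φ := by
    funext y; rw [hφ]
  rw [this]
  exact φ.injective

lemma aeval_pow_card_pow (g : F[X]) (x : K) (i : ℕ) :
    ((aeval x) g) ^ (Fintype.card F) ^ i = (aeval (x ^ (Fintype.card F) ^ i)) g := by
  obtain ⟨φ, hφ⟩ := exists_frob F K i
  have hcomp : φ.comp (algebraMap F K) = algebraMap F K :=
    RingHom.ext fun y => frob_comp_alg hφ y
  have h2 : φ ((aeval x) g) = (aeval (x ^ (Fintype.card F) ^ i)) g := by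
    rw [aeval_def, aeval_def, hom_eval₂, hcomp, hφ]
  rw [← h2, hφ]

lemma alg_add_pow_card_pow (a : F) (x : K) (i : ℕ) :
    (algebraMap F K a + x) ^ (Fintype.card F) ^ i
      = algebraMap F K a + x ^ (Fintype.card F) ^ i := by
  obtain ⟨φ, hφ⟩ := exists_frob F K i
  rw [← hφ, map_add, frob_comp_alg hφ, hφ]

lemma root_pow_card_pow {h : F[X]} {x : K} (hx : (aeval x) h = 0) (i : ℕ) :
    (aeval (x ^ (Fintype.card F) ^ i)) h = 0 := by
  have hcard : (Fintype.card F : ℕ) ≠ 0 := Fintype.card_pos.ne'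
  rw [← aeval_pow_card_pow, hx, zero_pow (pow_ne_zero _ hcard)]

end Frobenius

section ConjProd

variable {F : Type*} [Field F] [Fintype F] {h : F[X]}

/-- An irreducible polynomial over a finite field splits in `AdjoinRoot h` with roots the
Frobenius orbit of `root h`. -/
lemma map_eq_prod_conj (hh : h.Monic) (hirr : Irreducible h) [Fact (Irreducible h)] :
    h.map (algebraMap F (AdjoinRoot h)) =
      ∏ i ∈ Finset.range h.natDegree,
        (X - C ((AdjoinRoot.root h) ^ (Fintype.card F) ^ i)) := by
  set K := AdjoinRoot h with hK
  set β : K := AdjoinRoot.root h with hβ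
  set q := Fintype.card F with hq_def
  set m := h.natDegree with hm_def
  have hq2 : 2 ≤ q := Fintype.one_lt_card
  have hm1 : 1 ≤ m := hirr.natDegree_pos
  have h0 : h ≠ 0 := hh.ne_zero
  letI pb := AdjoinRoot.powerBasis h0
  haveI : Module.Finite F K := pb.finite
  haveI : Finite K := Module.finite_of_finite F
  letI : Fintype K := Fintype.ofFinite K
  have hcardK : Fintype.card K = q ^ m := by
    rw [Module.card_eq_pow_finrank (K := F) (V := K), pb.finrank, AdjoinRoot.powerBasis_dim]
  -- each Frobenius conjugate is a root
  have haux : ∀ i : ℕ, (aeval (β ^ q ^ i)) h = 0 := by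
    intro i
    have hroot : (aeval β) h = 0 := by
      rw [hβ, AdjoinRoot.aeval_eq, AdjoinRoot.mk_self]
    exact root_pow_card_pow hroot i
  -- all elements of K are fixed by the m-th power of Frobenius, and by no smaller one
  have hC1 : ∀ t : ℕ, 1 ≤ t → t < m → β ^ q ^ t ≠ β := by
    intro t ht1 htm hβt
    obtain ⟨φ, hφ⟩ := exists_frob F K t
    have hfix : ∀ x : K, x ^ q ^ t = x := by
      intro x
      obtain ⟨g, rfl⟩ := AdjoinRoot.mk_surjective x
      rw [← AdjoinRoot.aeval_eq, ← hβ, aeval_pow_card_pow, hβt]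
    set Φ : K[X] := X ^ q ^ t - X with hΦ
    have hqt1 : 1 < q ^ t := by
      calc 1 < q := hq2
      _ = q ^ 1 := (pow_one q).symm
      _ ≤ q ^ t := Nat.pow_le_pow_right (by omega) ht1
    have hΦm : Φ.Monic := (monic_X_pow (q ^ t)).sub_of_left (by
      rw [degree_X, degree_X_pow]; exact_mod_cast hqt1)
    have hΦne : Φ ≠ 0 := hΦm.ne_zero
    have hsubroots : (Finset.univ : Finset K) ⊆ Φ.roots.toFinset := by
      intro x _
      rw [Multiset.mem_toFinset, mem_roots hΦne]
      simp only [hΦ, IsRoot.def, eval_sub, eval_pow, eval_X]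
      rw [hfix x, sub_self]
    have hdegΦ : Φ.natDegree ≤ q ^ t := by
      refine le_trans (natDegree_sub_le _ _) ?_
      simp only [natDegree_X_pow, natDegree_X]
      omega
    have hcount : Fintype.card K ≤ q ^ t := by
      calc Fintype.card K = (Finset.univ : Finset K).card := rfl
        _ ≤ Φ.roots.toFinset.card := Finset.card_le_card hsubroots
        _ ≤ Multiset.card Φ.roots := Φ.roots.toFinset_card_le
        _ ≤ Φ.natDegree := Φ.card_roots'
        _ ≤ q ^ t := hdegΦ
    rw [hcardK] at hcount
    exact absurd hcount (not_le.mpr (Nat.pow_lt_pow_right hq2 htm))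
  have hkey : ∀ i j : ℕ, i < j → j < m → β ^ q ^ i = β ^ q ^ j → False := by
    intro i j hij hjm heq'
    have h1 : (β ^ q ^ (j - i)) ^ q ^ i = β ^ q ^ j := by
      rw [← pow_mul, ← pow_add, Nat.sub_add_cancel hij.le]
    have h2 : (β ^ q ^ (j - i)) ^ q ^ i = β ^ q ^ i := by rw [h1, ← heq']
    have h3 : β ^ q ^ (j - i) = β := pow_card_pow_injective (F := F) i h2
    exact hC1 (j - i) (by omega) (by omega) h3
  have hinj : Set.InjOn (fun i : ℕ => β ^ q ^ i) (Finset.range m) := by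
    intro i hi j hj hij
    simp only [Finset.coe_range, Set.mem_Iio] at hi hj
    rcases lt_trichotomy i j with hlt | heq | hgt
    · exact absurd hij (fun e => hkey i j hlt hj e)
    · exact heq
    · exact absurd hij.symm (fun e => hkey j i hgt hi e)
  -- assemble
  have hmapne : h.map (algebraMap F K) ≠ 0 := by
    intro e0
    exact h0 ((Polynomial.map_eq_zero_iff (algebraMap F K).injective).mp e0)
  have hdegmap : (h.map (algebraMap F K)).natDegree = m := natDegree_map _
  set R := (h.map (algebraMap F K)).roots with hR
  have hmem : ∀ i ∈ Finset.range m, β ^ q ^ i ∈ R := by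
    intro i _
    rw [hR, mem_roots hmapne, IsRoot.def, eval_map, ← aeval_def]
    exact haux i
  set s : Finset K := (Finset.range m).image (fun i => β ^ q ^ i) with hs
  have hcards : s.card = m := by
    rw [hs, Finset.card_image_of_injOn hinj, Finset.card_range]
  have hsub : s ⊆ R.toFinset := by
    intro x hx
    rw [hs, Finset.mem_image] at hx
    obtain ⟨i, him, rfl⟩ := hx
    exact Multiset.mem_toFinset.mpr (hmem i him)
  have hRcard_le : Multiset.card R ≤ m := by
    have h5 := (h.map (algebraMap F K)).card_roots'
    rwa [hdegmap] at h5
  have h5 : m ≤ R.toFinset.card := by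
    rw [← hcards]; exact Finset.card_le_card hsub
  have h6 : R.toFinset.card ≤ Multiset.card R := R.toFinset_card_le
  have hRcard : Multiset.card R = m := le_antisymm hRcard_le (le_trans h5 h6)
  have hsplit : Splits (h.map (algebraMap F K)) :=
    (splits_iff_card_roots).mpr (by rw [← hR, hRcard, hdegmap])
  have heqprod := Splits.eq_prod_roots_of_monic hsplit (hh.map (algebraMap F K))
  have hsval : s.val ≤ R := by
    refine (Multiset.le_iff_subset s.nodup).mpr ?_
    intro x hx
    exact Multiset.mem_toFinset.mp (hsub hx)
  have hR_eq : R = s.val :=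
    (Multiset.eq_of_le_of_card_le hsval (by rw [hRcard, ← hcards]; rfl)).symm
  rw [heqprod, ← hR, hR_eq, hs, Finset.image_val_of_injOn hinj, Multiset.map_map,
    Finset.prod_eq_multiset_prod]
  rfl

lemma conj_prod_eq (hh : h.Monic) (hirr : Irreducible h) [Fact (Irreducible h)] (a : F) :
    (algebraMap F (AdjoinRoot h) a + AdjoinRoot.root h)
        ^ (∑ i ∈ Finset.range h.natDegree, (Fintype.card F) ^ i)
      = algebraMap F (AdjoinRoot h) ((-1) ^ h.natDegree * h.eval (-a)) := by
  have hmap := map_eq_prod_conj hh hirr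
  set K := AdjoinRoot h with hK
  set β : K := AdjoinRoot.root h with hβ
  set q := Fintype.card F with hq_def
  set m := h.natDegree with hm_def
  have h1 : (algebraMap F K a + β) ^ (∑ i ∈ Finset.range m, q ^ i)
      = ∏ i ∈ Finset.range m, (algebraMap F K a + β) ^ q ^ i := by
    rw [Finset.prod_pow_eq_pow_sum]
  have h2 : ∀ i ∈ Finset.range m,
      (algebraMap F K a + β) ^ q ^ i = algebraMap F K a + β ^ q ^ i := by
    intro i _
    exact alg_add_pow_card_pow a β i
  rw [h1, Finset.prod_congr rfl h2]
  have h3 := congrArg (fun Q : K[X] => Q.eval (algebraMap F K (-a))) hmap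
  rw [eval_map, Polynomial.eval₂_hom, eval_prod] at h3
  simp only [eval_sub, eval_X, eval_C] at h3
  have h4 : ∀ i ∈ Finset.range m,
      algebraMap F K (-a) - β ^ q ^ i = -1 * (algebraMap F K a + β ^ q ^ i) := by
    intro i _
    rw [map_neg]; ring
  rw [Finset.prod_congr rfl h4, Finset.prod_mul_distrib, Finset.prod_const,
    Finset.card_range] at h3
  have h5 : ((-1 : K) ^ m) * ((-1 : K) ^ m) = 1 := by
    rw [← pow_add, ← two_mul, pow_mul]; norm_num
  rw [map_mul, map_pow, map_neg, map_one, h3]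
  rw [← mul_assoc, h5, one_mul]

end ConjProd

section Descent

/-- Descending the `l`-th power property along a finite field extension via the norm. -/
lemma pow_descent {F K : Type*} [Field F] [Fintype F] [Field K] [Fintype K] [Algebra F K]
    {l kq m : ℕ} (hm : 1 ≤ m) (hcardK : Fintype.card K = Fintype.card F ^ m)
    (hq : Fintype.card F - 1 = l * kq) (hl : 1 ≤ l) (c : K) (Pv : F)
    (hP : algebraMap F K Pv = c ^ (∑ i ∈ Finset.range m, (Fintype.card F) ^ i)) :
    (∃ b : K, b ^ l = c) ↔ (∃ b : F, b ^ l = Pv) := by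
  have hq2 : 2 ≤ Fintype.card F := Fintype.one_lt_card
  have hl0 : l ≠ 0 := by omega
  have halg : Function.Injective (algebraMap F K) := (algebraMap F K).injective
  have hsum1 : 1 ≤ ∑ i ∈ Finset.range m, (Fintype.card F) ^ i := by
    calc 1 = ∑ i ∈ Finset.range 1, (Fintype.card F) ^ i := by simp
    _ ≤ ∑ i ∈ Finset.range m, (Fintype.card F) ^ i :=
      Finset.sum_le_sum_of_subset (Finset.range_subset_range.mpr hm)
  rcases eq_or_ne c 0 with rfl | hc
  · have hPv : Pv = 0 := by
      apply halg
      rw [hP, map_zero, zero_pow (Nat.pos_iff_ne_zero.mp hsum1)]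
    subst hPv
    constructor
    · intro _; exact ⟨0, by rw [zero_pow hl0]⟩
    · intro _; exact ⟨0, by rw [zero_pow hl0]⟩
  · have hPv : Pv ≠ 0 := by
      intro e0
      rw [e0, map_zero] at hP
      exact hc ((pow_eq_zero_iff (Nat.pos_iff_ne_zero.mp hsum1)).mp hP.symm)
    -- power criterion in K
    have hcardKm : Fintype.card K - 1
        = l * (kq * ∑ i ∈ Finset.range m, (Fintype.card F) ^ i) := by
      rw [hcardK, ← nat_geom (Fintype.card F) m (by omega), hq, mul_assoc]
    have hcritK := pow_criterion hcardKm hc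
    have hcritF := pow_criterion (E := F) hq hPv
    rw [hcritK, hcritF]
    have h7 : c ^ (kq * ∑ i ∈ Finset.range m, (Fintype.card F) ^ i)
        = algebraMap F K (Pv ^ kq) := by
      rw [map_pow, hP, ← pow_mul, mul_comm kq]
    rw [h7]
    constructor
    · intro h8
      apply halg
      rw [h8, map_one]
    · intro h8
      rw [h8, map_one]

end Descent

section Capelli

variable {K : Type*} [Field K]

/-- Capelli's lemma, iff version: `f(g(x))` is irreducible iff `g(x) - β` is irreducible
over `K[β] = AdjoinRoot f`. -/
lemma capelli_iff {f g : K[X]} (hfm : f.Monic) (hgm : g.Monic) (hf : Irreducible f)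
    (hg : g.natDegree ≠ 0) [Fact (Irreducible f)] :
    Irreducible (f.comp g) ↔
      Irreducible (g.map (algebraMap K (AdjoinRoot f)) - C (AdjoinRoot.root f)) := by
  have hf0 : f ≠ 0 := hfm.ne_zero
  have hfd : f.natDegree ≠ 0 := fun e =>
    not_irreducible_C (f.coeff 0) (eq_C_of_natDegree_eq_zero e ▸ hf)
  set Kf := AdjoinRoot f with hKf
  set β : Kf := AdjoinRoot.root f with hβ
  set G : Kf[X] := g.map (algebraMap K Kf) - C β with hG
  have hGdeg : G.natDegree = g.natDegree := by
    rw [hG, natDegree_sub_C, natDegree_map]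
  have hGm : G.Monic := (hgm.map (algebraMap K Kf)).sub_of_left (by
    apply lt_of_le_of_lt (degree_C_le)
    rw [degree_map]
    exact natDegree_pos_iff_degree_pos.mp (Nat.pos_of_ne_zero hg))
  haveI : FiniteDimensional K Kf := (AdjoinRoot.powerBasis hf0).finite
  have hfinrank : Module.finrank K Kf = f.natDegree := by
    rw [(AdjoinRoot.powerBasis hf0).finrank, AdjoinRoot.powerBasis_dim]
  constructor
  · intro HI
    refine irreducible_of_factors_ge hGm (by rw [hGdeg]; exact hg) ?_
    intro p hp hpG
    have hp0 : p ≠ 0 := hp.ne_zero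
    haveI := Fact.mk hp
    set L := AdjoinRoot p with hL
    haveI : FiniteDimensional Kf L := (AdjoinRoot.powerBasis hp0).finite
    haveI : FiniteDimensional K L := FiniteDimensional.trans K Kf L
    set α : L := AdjoinRoot.root p with hα
    have hpα : (aeval α) p = 0 := by rw [hα, AdjoinRoot.aeval_eq, AdjoinRoot.mk_self]
    have hGα : (aeval α) G = 0 := aeval_eq_zero_of_dvd_aeval_eq_zero hpG hpα
    have hgα : (aeval α) g = algebraMap Kf L β := by
      rw [hG, map_sub, aeval_C, sub_eq_zero] at hGα
      rw [← hGα, aeval_map_algebraMap]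
    have hcomp0 : (aeval α) (f.comp g) = 0 := by
      rw [aeval_comp, hgα, aeval_algebraMap_apply]
      rw [hβ, AdjoinRoot.aeval_eq, AdjoinRoot.mk_self, map_zero]
    have hmin : f.comp g = minpoly K α :=
      minpoly.eq_of_irreducible_of_monic HI hcomp0 (hfm.comp hgm hg)
    have h1 : (f.comp g).natDegree ≤ Module.finrank K L := by
      rw [hmin]; exact minpoly.natDegree_le α
    have h2 : Module.finrank K L = f.natDegree * Module.finrank Kf L := by
      rw [← Module.finrank_mul_finrank K Kf L, hfinrank]
    have h3 : Module.finrank Kf L = p.natDegree := by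
      rw [(AdjoinRoot.powerBasis hp0).finrank, AdjoinRoot.powerBasis_dim]
    rw [natDegree_comp, h2, h3] at h1
    rw [hGdeg]
    exact Nat.le_of_mul_le_mul_left h1 (Nat.pos_of_ne_zero hfd)
  · intro HG
    refine irreducible_of_factors_ge (hfm.comp hgm hg)
      (by rw [natDegree_comp]; exact Nat.mul_ne_zero hfd hg) ?_
    intro p hp hpc
    have hp0 : p ≠ 0 := hp.ne_zero
    haveI := Fact.mk hp
    set L := AdjoinRoot p with hL
    set α : L := AdjoinRoot.root p with hα
    haveI : FiniteDimensional K L := (AdjoinRoot.powerBasis hp0).finite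
    have hpα : (aeval α) p = 0 := by rw [hα, AdjoinRoot.aeval_eq, AdjoinRoot.mk_self]
    have hcomp0 : (aeval α) (f.comp g) = 0 := aeval_eq_zero_of_dvd_aeval_eq_zero hpc hpα
    have hfgα : (aeval ((aeval α) g)) f = 0 := by rw [← aeval_comp]; exact hcomp0
    let ι : Kf →ₐ[K] L := AdjoinRoot.liftAlgHom f (Algebra.ofId K L) ((aeval α) g)
      (by rw [aeval_def] at hfgα; exact hfgα)
    letI : Algebra Kf L := ι.toRingHom.toAlgebra
    haveI : IsScalarTower K Kf L := IsScalarTower.of_algebraMap_eq (fun x => (ι.commutes x).symm)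
    haveI : FiniteDimensional Kf L := FiniteDimensional.right K Kf L
    have hβι : algebraMap Kf L β = (aeval α) g := by
      have h9 : ι (AdjoinRoot.root f) = (aeval α) g := AdjoinRoot.liftAlgHom_root _ _ _ _
      exact h9
    have hGα : (aeval α) G = 0 := by
      rw [hG, map_sub, aeval_C, aeval_map_algebraMap, hβι, sub_self]
    have hmin : G = minpoly Kf α := minpoly.eq_of_irreducible_of_monic HG hGα hGm
    have h1 : G.natDegree ≤ Module.finrank Kf L := by
      rw [hmin]; exact minpoly.natDegree_le α
    have h2 : Module.finrank K L = f.natDegree * Module.finrank Kf L := by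
      rw [← Module.finrank_mul_finrank K Kf L, hfinrank]
    have h3 : Module.finrank K L = p.natDegree := by
      rw [(AdjoinRoot.powerBasis hp0).finrank, AdjoinRoot.powerBasis_dim]
    rw [hGdeg] at h1
    rw [natDegree_comp, ← h3, h2]
    exact Nat.mul_le_mul_left _ h1

end Capelli

section Kummer

/-- Criterion for irreducibility of `X^d - c` over a finite field when `4 ∤ d` and every
prime divisor of `d` divides `card K - 1`. -/
lemma kummer_finite {K : Type*} [Field K] [Fintype K] {d : ℕ} (hd : 2 ≤ d) (hd4 : ¬ 4 ∣ d)
    (hdiv : ∀ l : ℕ, l.Prime → l ∣ d → l ∣ Fintype.card K - 1) (c : K) :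
    Irreducible (X ^ d - C c : K[X]) ↔
      ∀ l : ℕ, l.Prime → l ∣ d → ¬ ∃ b : K, b ^ l = c := by
  rcases Nat.even_or_odd d with hev | hodd
  swap
  · rw [X_pow_sub_C_irreducible_iff_forall_prime_of_odd hodd]
    constructor
    · rintro H l hl hld ⟨b, hb⟩
      exact (H l hl hld b) hb
    · intro H p hp hpd b hb
      exact H p hp hpd ⟨b, hb⟩
  · obtain ⟨r, hr⟩ := hev
    have hd2 : d = 2 * r := by omega
    have hr1 : 1 ≤ r := by omega
    have hmodd : Odd r := by
      rcases Nat.even_or_odd r with h | h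
      · exfalso
        obtain ⟨s, hs⟩ := h
        exact hd4 ⟨s, by omega⟩
      · exact h
    by_cases hsq : ∃ b : K, b ^ 2 = c
    · obtain ⟨b, rfl⟩ := hsq
      have hL : ¬ Irreducible (X ^ d - C (b ^ 2) : K[X]) := by
        rw [hd2]
        exact reducible_X_pow_sub_C_pow le_rfl hr1 b
      have hR : ¬ (∀ l : ℕ, l.Prime → l ∣ d → ¬ ∃ b' : K, b' ^ l = b ^ 2) := fun H =>
        (H 2 Nat.prime_two ⟨r, hd2⟩) ⟨b, rfl⟩
      exact iff_of_false hL hR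
    · have hc0 : c ≠ 0 := by
        rintro rfl
        exact hsq ⟨0, by norm_num⟩
      have hirr2 : Irreducible (X ^ 2 - C c : K[X]) :=
        X_pow_sub_C_irreducible_of_prime Nat.prime_two (by push_neg at hsq; exact hsq)
      haveI := Fact.mk hirr2
      set K₂ := AdjoinRoot (X ^ 2 - C c : K[X]) with hK₂
      set γ : K₂ := AdjoinRoot.root _ with hγ
      have hcap := capelli_iff (f := (X ^ 2 - C c : K[X])) (g := (X ^ r : K[X]))
        (monic_X_pow_sub_C c two_ne_zero) (monic_X_pow r) hirr2
        (by rw [natDegree_X_pow]; omega)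
      have hcompeq : (X ^ 2 - C c : K[X]).comp (X ^ r) = X ^ d - C c := by
        rw [sub_comp, pow_comp, X_comp, C_comp, ← pow_mul, mul_comm r 2, ← hd2]
      have hGeq : (X ^ r : K[X]).map (algebraMap K K₂) - C γ = X ^ r - C γ := by
        rw [Polynomial.map_pow, map_X]
      rw [hcompeq, hGeq] at hcap
      rw [hcap, X_pow_sub_C_irreducible_iff_forall_prime_of_odd hmodd]
      have h20 : (X ^ 2 - C c : K[X]) ≠ 0 := (monic_X_pow_sub_C c two_ne_zero).ne_zero
      haveI : Module.Finite K K₂ := (AdjoinRoot.powerBasis h20).finite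
      haveI : Finite K₂ := Module.finite_of_finite K
      letI : Fintype K₂ := Fintype.ofFinite K₂
      have hcardK₂ : Fintype.card K₂ = (Fintype.card K) ^ 2 := by
        rw [Module.card_eq_pow_finrank (K := K) (V := K₂), (AdjoinRoot.powerBasis h20).finrank,
          AdjoinRoot.powerBasis_dim, natDegree_X_pow_sub_C]
      have hγ2 : γ ^ 2 = algebraMap K K₂ c := by
        have h9 : (aeval γ) (X ^ 2 - C c : K[X]) = 0 := by
          rw [hγ, AdjoinRoot.aeval_eq, AdjoinRoot.mk_self]
        rwa [map_sub, map_pow, aeval_X, aeval_C, sub_eq_zero] at h9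
      have hγ0 : γ ≠ 0 := by
        intro e0
        rw [e0, zero_pow two_ne_zero] at hγ2
        exact hc0 ((_root_.map_eq_zero (algebraMap K K₂)).mp hγ2.symm)
      set Q := Fintype.card K with hQdef
      have hQ1 : 2 ≤ Q := Fintype.one_lt_card
      have key : ∀ l : ℕ, l.Prime → l ∣ r → ((∃ b : K₂, b ^ l = γ) ↔ (∃ b : K, b ^ l = c)) := by
        intro l hl hlr
        have hlodd : Odd l := hl.odd_of_ne_two (by
          rintro rfl
          exact (Nat.not_even_iff_odd.mpr hmodd) (even_iff_two_dvd.mpr hlr))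
        obtain ⟨k, hk⟩ : l ∣ Q - 1 := hdiv l hl (hlr.trans ⟨2, by omega⟩)
        have h2Q : 2 ∣ Q - 1 := hdiv 2 Nat.prime_two ⟨r, hd2⟩
        have hkeven : Even k := by
          have hQeven : Even (Q - 1) := even_iff_two_dvd.mpr h2Q
          rw [hk, Nat.even_mul] at hQeven
          rcases hQeven with h | h
          · exact absurd h (Nat.not_even_iff_odd.mpr hlodd)
          · exact h
        have e1 : (Q - 1) * (Q + 1) = Q ^ 2 - 1 := by
          have e2 : Q * (Q + 1) = Q ^ 2 + Q := by ring
          have e3 := Nat.sub_mul Q 1 (Q + 1)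
          omega
        have hcard2 : Fintype.card K₂ - 1 = l * (k * (Q + 1)) := by
          rw [hcardK₂, ← e1, hk, mul_assoc]
        have hγQ : (γ ^ (Q - 1)) ^ 2 = 1 := by
          rw [← pow_mul, mul_comm, pow_mul, hγ2, ← map_pow,
            FiniteField.pow_card_sub_one_eq_one c hc0, map_one]
        have hγpm : γ ^ (Q - 1) = 1 ∨ γ ^ (Q - 1) = -1 := by
          have h10 : (γ ^ (Q - 1) - 1) * (γ ^ (Q - 1) + 1) = 0 := by
            linear_combination hγQ
          rcases mul_eq_zero.mp h10 with h | h
          · left; exact sub_eq_zero.mp h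
          · right; exact eq_neg_of_add_eq_zero_left h
        have hstep : γ ^ (k * (Q + 1)) = algebraMap K K₂ (c ^ k) := by
          rw [mul_comm k (Q + 1), pow_mul]
          have e4 : γ ^ (Q + 1) = algebraMap K K₂ c * γ ^ (Q - 1) := by
            have e5 : Q + 1 = 2 + (Q - 1) := by omega
            rw [e5, pow_add, hγ2]
          rw [e4, mul_pow, ← map_pow]
          rcases hγpm with h | h
          · rw [h, one_pow, mul_one]
          · rw [h, hkeven.neg_one_pow, mul_one]
        calc (∃ b : K₂, b ^ l = γ) ↔ γ ^ (k * (Q + 1)) = 1 := pow_criterion hcard2 hγ0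
          _ ↔ c ^ k = 1 := by
              rw [hstep]
              exact ⟨fun h => (map_eq_one_iff _ (algebraMap K K₂).injective).mp h,
                fun h => by rw [h, map_one]⟩
          _ ↔ (∃ b : K, b ^ l = c) := (pow_criterion hk hc0).symm
      constructor
      · intro H l hl hld
        rcases (Nat.Prime.dvd_mul hl).mp (hd2 ▸ hld) with h2 | hlr
        · have : l = 2 := (Nat.prime_dvd_prime_iff_eq hl Nat.prime_two).mp h2
          subst this
          exact hsq
        · rintro ⟨b, hb⟩
          obtain ⟨b₂, hb₂⟩ := (key l hl hlr).mpr ⟨b, hb⟩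
          exact (H l hl hlr b₂) hb₂
      · intro H l hl hlr b hb
        exact H l hl (hlr.trans ⟨2, by omega⟩) ((key l hl hlr).mp ⟨b, hb⟩)

end Kummer

section Step

variable {F : Type*} [Field F] [Fintype F]

/-- The key inductive step. -/
lemma step_lemma {d : ℕ} (hd : 2 ≤ d) (hd4 : ¬ 4 ∣ d)
    (hq : ∀ l : ℕ, l.Prime → l ∣ d → l ∣ Fintype.card F - 1) (a : F)
    {h : F[X]} (hh : h.Monic) (hirr : Irreducible h) :
    Irreducible (h.comp (X ^ d - C a)) ↔
      ∀ l : ℕ, l.Prime → l ∣ d →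
        ¬ ∃ b : F, b ^ l = (-1 : F) ^ h.natDegree * h.eval (-a) := by
  haveI := Fact.mk hirr
  have h0 : h ≠ 0 := hh.ne_zero
  set K := AdjoinRoot h with hK
  set β : K := AdjoinRoot.root h with hβ
  set m := h.natDegree with hm
  have hm1 : 1 ≤ m := hirr.natDegree_pos
  haveI : Module.Finite F K := (AdjoinRoot.powerBasis h0).finite
  haveI : Finite K := Module.finite_of_finite F
  letI : Fintype K := Fintype.ofFinite K
  have hcardK : Fintype.card K = (Fintype.card F) ^ m := by
    rw [Module.card_eq_pow_finrank (K := F) (V := K), (AdjoinRoot.powerBasis h0).finrank,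
      AdjoinRoot.powerBasis_dim]
  have hcap := capelli_iff hh (monic_X_pow_sub_C a (by omega : d ≠ 0)) hirr
    (by rw [natDegree_X_pow_sub_C]; omega)
  have hGeq : (X ^ d - C a : F[X]).map (algebraMap F K) - C β
      = X ^ d - C (algebraMap F K a + β) := by
    rw [Polynomial.map_sub, Polynomial.map_pow, map_X, map_C, C_add, sub_sub]
  rw [hGeq] at hcap
  rw [hcap]
  have hdivK : ∀ l : ℕ, l.Prime → l ∣ d → l ∣ Fintype.card K - 1 := by
    intro l hl hld
    have h1 := hq l hl hld
    rw [hcardK]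
    have h2 : (Fintype.card F - 1) ∣ (Fintype.card F ^ m - 1) := by
      simpa using Nat.sub_dvd_pow_sub_pow (Fintype.card F) 1 m
    exact h1.trans h2
  rw [kummer_finite hd hd4 hdivK]
  have hiff : ∀ l : ℕ, l.Prime → l ∣ d →
      ((∃ b : K, b ^ l = algebraMap F K a + β) ↔
        (∃ b : F, b ^ l = (-1 : F) ^ m * h.eval (-a))) := by
    intro l hl hld
    obtain ⟨kq, hkq⟩ := hq l hl hld
    exact pow_descent hm1 hcardK hkq hl.one_lt.le (algebraMap F K a + β)
      ((-1 : F) ^ m * h.eval (-a)) (conj_prod_eq hh hirr a).symm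
  constructor
  · intro H l hl hld hex
    exact H l hl hld ((hiff l hl hld).mpr hex)
  · intro H l hl hld hex
    exact H l hl hld ((hiff l hl hld).mp hex)

end Step

section Iter

variable {F : Type*} [Field F]

lemma iter_zero (f : F[X]) : iter f 0 = X := rfl

lemma iter_succ (f : F[X]) (n : ℕ) : iter f (n + 1) = (iter f n).comp f := rfl

lemma monic_f {d : ℕ} (hd : 1 ≤ d) (a : F) : (X ^ d - C a : F[X]).Monic :=
  monic_X_pow_sub_C a (by omega)

lemma f_natDegree {d : ℕ} (a : F) : (X ^ d - C a : F[X]).natDegree = d :=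
  natDegree_X_pow_sub_C

lemma iter_monic {d : ℕ} (hd : 1 ≤ d) (a : F) (n : ℕ) :
    (iter (X ^ d - C a : F[X]) n).Monic := by
  induction n with
  | zero => exact monic_X
  | succ n ih =>
    rw [iter_succ]
    exact ih.comp (monic_f hd a) (by rw [f_natDegree]; omega)

lemma iter_natDegree {d : ℕ} (hd : 1 ≤ d) (a : F) (n : ℕ) :
    (iter (X ^ d - C a : F[X]) n).natDegree = d ^ n := by
  induction n with
  | zero => simp [iter_zero]
  | succ n ih =>
    rw [iter_succ, natDegree_comp, ih, f_natDegree, pow_succ]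

lemma iter_succ_left (f : F[X]) (n : ℕ) : iter f (n + 1) = f.comp (iter f n) := by
  induction n with
  | zero => rw [iter_succ, iter_zero, X_comp, comp_X]
  | succ n ih =>
    rw [iter_succ, ih, comp_assoc, ← iter_succ, ← ih]

lemma P_succ {d : ℕ} (a : F) (n : ℕ) (hn : 1 ≤ n) :
    P d a (n + 1) = (P d a n) ^ d + (-1 : F) ^ (d - 1) * a := by
  obtain ⟨k, rfl⟩ : ∃ k, n = k + 1 := ⟨n - 1, by omega⟩
  rfl

lemma sign_eq {d n : ℕ} (hd : 1 ≤ d) :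
    ((-1 : F) ^ (d - 1)) = -((-1 : F) ^ (d ^ (n + 1))) := by
  rcases Nat.even_or_odd d with hev | hodd
  · rw [Odd.neg_one_pow (Nat.Even.sub_odd hd hev odd_one),
      Even.neg_one_pow (Nat.even_pow.mpr ⟨hev, by omega⟩)]
  · rw [Even.neg_one_pow (Nat.Odd.sub_odd hodd odd_one),
      Odd.neg_one_pow (hodd.pow)]
    norm_num

lemma P_eq_iter {d : ℕ} (hd : 1 ≤ d) (a : F) :
    ∀ n : ℕ, 1 ≤ n →
      P d a n = (-1 : F) ^ (d ^ (n - 1)) * (iter (X ^ d - C a : F[X]) n).eval 0 := by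
  have key : ∀ n : ℕ,
      P d a (n + 1) = (-1 : F) ^ (d ^ n) * (iter (X ^ d - C a : F[X]) (n + 1)).eval 0 := by
    intro n
    induction n with
    | zero =>
      have h1 : iter (X ^ d - C a : F[X]) 1 = X ^ d - C a := by
        rw [iter_succ, iter_zero, X_comp]
      rw [h1]
      simp [P, zero_pow (by omega : d ≠ 0)]
    | succ n ih =>
      have hE : (iter (X ^ d - C a : F[X]) (n + 2)).eval 0
          = ((iter (X ^ d - C a : F[X]) (n + 1)).eval 0) ^ d - a := by
        rw [iter_succ_left, eval_comp, eval_sub, eval_pow, eval_X, eval_C]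
      rw [P_succ a (n + 1) (by omega), ih, hE]
      rw [mul_pow, ← pow_mul, ← pow_succ, sign_eq (n := n) hd]
      ring
  intro n hn
  obtain ⟨k, rfl⟩ : ∃ k, n = k + 1 := ⟨n - 1, by omega⟩
  simpa using key k

lemma P_reduce {d n₀ m₀ : ℕ} {a : F} (hn₀ : 1 ≤ n₀) (hlt : n₀ < m₀)
    (heq : P d a n₀ = P d a m₀) :
    ∀ k : ℕ, 1 ≤ k → ∃ k' : ℕ, 1 ≤ k' ∧ k' ≤ m₀ - 1 ∧ P d a k = P d a k' := by
  intro k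
  induction k using Nat.strong_induction_on with
  | _ k IH =>
    intro hk
    by_cases hkm : k ≤ m₀ - 1
    · exact ⟨k, hk, hkm, rfl⟩
    · have hkm' : m₀ ≤ k := by omega
      have hper : ∀ jj : ℕ, P d a (n₀ + jj) = P d a (m₀ + jj) := by
        intro jj
        induction jj with
        | zero => simpa using heq
        | succ i ih =>
          have h1 : n₀ + (i + 1) = (n₀ + i) + 1 := by omega
          have h2 : m₀ + (i + 1) = (m₀ + i) + 1 := by omega
          rw [h1, h2, P_succ a _ (by omega), P_succ a _ (by omega), ih]
      have hkey : P d a k = P d a (n₀ + (k - m₀)) := by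
        rw [hper (k - m₀)]
        congr 1
        omega
      obtain ⟨k', h1, h2, h3⟩ := IH (n₀ + (k - m₀)) (by omega) (by omega)
      exact ⟨k', h1, h2, hkey.trans h3⟩

end Iter

theorem stmt17 (q d n₀ m₀ : ℕ) (hd : 2 ≤ d) (hd4 : ¬ (4 ∣ d))
    (F : Type*) [Field F] [Fintype F] (hF : Fintype.card F = q)
    (a : F) (ha : a ≠ 0)
    (hn₀ : 1 ≤ n₀) (hlt : n₀ < m₀) (heq : P d a n₀ = P d a m₀)
    (hn₀min : ∀ n m : ℕ, 1 ≤ n → n < m → P d a n = P d a m → n₀ ≤ n)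
    (hm₀min : ∀ m : ℕ, n₀ < m → P d a n₀ = P d a m → m₀ ≤ m) :
    (∀ n : ℕ, 1 ≤ n → Irreducible (iter (X ^ d - C a : F[X]) n)) ↔
      (∀ l : ℕ, l.Prime → l ∣ d → ∀ k : ℕ, 1 ≤ k → k ≤ m₀ - 1 →
        P d a k ≠ 0 ∧ ¬ ∃ b : F, b ^ l = P d a k) := by
  have hm₀2 : 2 ≤ m₀ := by omega
  by_cases hqd : ∀ l : ℕ, l.Prime → l ∣ d → l ∣ Fintype.card F - 1
  · -- main branch
    have hstep : ∀ N : ℕ,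
        (∀ n, 1 ≤ n → n ≤ N → Irreducible (iter (X ^ d - C a : F[X]) n)) ↔
        (∀ l : ℕ, l.Prime → l ∣ d → ∀ k, 1 ≤ k → k ≤ N → ¬ ∃ b : F, b ^ l = P d a k) := by
      intro N
      induction N with
      | zero =>
        constructor
        · intro _ l _ _ k hk1 hk0
          exfalso; omega
        · intro _ n h1 h0
          exfalso; omega
      | succ N ihN =>
        have hval : (-1 : F) ^ (iter (X ^ d - C a : F[X]) N).natDegree
            * (iter (X ^ d - C a : F[X]) N).eval (-a) = P d a (N + 1) := by
          rw [iter_natDegree (by omega : 1 ≤ d) a N,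
            P_eq_iter (by omega : 1 ≤ d) a (N + 1) (by omega)]
          simp only [Nat.add_sub_cancel]
          have he : (iter (X ^ d - C a : F[X]) (N + 1)).eval 0
              = (iter (X ^ d - C a : F[X]) N).eval (-a) := by
            rw [iter_succ, eval_comp, eval_sub, eval_pow, eval_X, eval_C,
              zero_pow (by omega : d ≠ 0), zero_sub]
          rw [he]
        constructor
        · intro H l hl hld k hk1 hkN
          rcases Nat.lt_or_ge k (N + 1) with hlt' | hge
          · exact ihN.mp (fun n h1 h2 => H n h1 (by omega)) l hl hld k hk1 (by omega)
          · have hkeq : k = N + 1 := by omega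
            subst hkeq
            have hirrN : Irreducible (iter (X ^ d - C a : F[X]) N) := by
              rcases Nat.eq_zero_or_pos N with rfl | hN
              · rw [iter_zero]; exact irreducible_X
              · exact H N (by omega) (by omega)
            have hs := (step_lemma hd hd4 hqd a (iter_monic (by omega) a N) hirrN).mp
              (H (N + 1) (by omega) le_rfl) l hl hld
            rw [← hval]
            exact hs
        · intro H
          have hprev : ∀ n, 1 ≤ n → n ≤ N → Irreducible (iter (X ^ d - C a : F[X]) n) :=
            ihN.mpr (fun l hl hld k h1 h2 => H l hl hld k h1 (by omega))
          intro n h1 h2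
          rcases Nat.lt_or_ge n (N + 1) with hlt' | hge
          · exact hprev n h1 (by omega)
          · have hneq : n = N + 1 := by omega
            subst hneq
            have hirrN : Irreducible (iter (X ^ d - C a : F[X]) N) := by
              rcases Nat.eq_zero_or_pos N with rfl | hN
              · rw [iter_zero]; exact irreducible_X
              · exact hprev N (by omega) (by omega)
            exact (step_lemma hd hd4 hqd a (iter_monic (by omega) a N) hirrN).mpr
              (fun l hl hld => by
                rw [hval]
                exact H l hl hld (N + 1) (by omega) le_rfl)
    constructor
    · intro H l hl hld k hk1 hkm
      have h1 := (hstep k).mp (fun n a1 _ => H n a1) l hl hld k hk1 le_rfl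
      refine ⟨?_, h1⟩
      intro h0
      exact h1 ⟨0, by rw [zero_pow hl.ne_zero, h0]⟩
    · intro H n hn
      have hcond : ∀ l : ℕ, l.Prime → l ∣ d → ∀ k, 1 ≤ k → k ≤ n →
          ¬ ∃ b : F, b ^ l = P d a k := by
        intro l hl hld k hk1 _
        obtain ⟨k', h1, h2, h3⟩ := P_reduce hn₀ hlt heq k hk1
        rw [h3]
        exact (H l hl hld k' h1 h2).2
      exact (hstep n).mpr hcond n hn le_rfl
  · -- degenerate branch: both sides false
    push_neg at hqd
    obtain ⟨l₀, hl₀p, hl₀d, hl₀nd⟩ := hqd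
    obtain ⟨b, hb⟩ := exists_pow_eq_of_not_dvd hl₀p hl₀nd a
    have hL : ¬ (∀ n : ℕ, 1 ≤ n → Irreducible (iter (X ^ d - C a : F[X]) n)) := by
      intro H
      have h1 := H 1 le_rfl
      have h2 : iter (X ^ d - C a : F[X]) 1 = X ^ d - C a := by
        rw [iter_succ, iter_zero, X_comp]
      rw [h2] at h1
      obtain ⟨m', hm'⟩ := hl₀d
      have hm'0 : m' ≠ 0 := by rintro rfl; omega
      rw [hm', ← hb] at h1
      exact reducible_X_pow_sub_C_pow hl₀p.two_le (by omega) b h1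
    have hR : ¬ (∀ l : ℕ, l.Prime → l ∣ d → ∀ k : ℕ, 1 ≤ k → k ≤ m₀ - 1 →
        P d a k ≠ 0 ∧ ¬ ∃ b : F, b ^ l = P d a k) := by
      intro H
      have h3 := H l₀ hl₀p hl₀d 1 le_rfl (by omega)
      exact h3.2 ⟨b, hb⟩
    exact iff_of_false hL hR
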